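/- For every simple graph G containing at least one edge and every odd integer k ≥ 7, the girth of the apex k-subdivision Ĝ_k of G equals k + 3. -/

import Mathlib

open Set

/-- The apex `k`-subdivision of a simple graph `G`, given an orientation `fst, snd` of its
edges: every edge `e` is replaced by a path `fst e, u_e^1, …, u_e^k, snd e` through `k` new
internal vertices (here `⟨e, t⟩` is `u_e^{t+1}`), and one new apex vertex (`none`) is added,
adjacent exactly to the original vertices of `G`. -/
def ApexSubdiv {V : Type*} (G : SimpleGraph V) (k : ℕ) (fst snd : Sym2 V → V) :
    SimpleGraph (Option (V ⊕ G.edgeSet × Fin k)) :=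
  SimpleGraph.fromRel (fun u v =>
    match u, v with
    | none, some (Sum.inl _) => True
    | some (Sum.inl x), some (Sum.inr (e, t)) =>
        (t.1 = 0 ∧ x = fst e.1) ∨ (t.1 = k - 1 ∧ x = snd e.1)
    | some (Sum.inr (e, t)), some (Sum.inr (e', t')) => e = e' ∧ t.1 + 1 = t'.1
    | _, _ => False)

namespace ApexAux
variable {V : Type*} {G : SimpleGraph V} {k : ℕ} {fst snd : Sym2 V → V}

def uu (kpos : 0 < k) (e : G.edgeSet) (i : ℕ) : Option (V ⊕ G.edgeSet × Fin k) :=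
  some (Sum.inr (e, ⟨i % k, Nat.mod_lt _ kpos⟩))

def aF (fst : Sym2 V → V) (e : G.edgeSet) : Option (V ⊕ G.edgeSet × Fin k) :=
  some (Sum.inl (fst e.1))

def aS (snd : Sym2 V → V) (e : G.edgeSet) : Option (V ⊕ G.edgeSet × Fin k) :=
  some (Sum.inl (snd e.1))

def prevW (kpos : 0 < k) (fst : Sym2 V → V) (e : G.edgeSet) (t : ℕ) :
    Option (V ⊕ G.edgeSet × Fin k) :=
  if t = 0 then aF fst e else uu kpos e (t-1)

def nextW (kpos : 0 < k) (snd : Sym2 V → V) (e : G.edgeSet) (t : ℕ) :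
    Option (V ⊕ G.edgeSet × Fin k) :=
  if t = k - 1 then aS snd e else uu kpos e (t+1)

lemma uu_inj (kpos : 0 < k) {e e' : G.edgeSet} {i j : ℕ} (hi : i < k) (hj : j < k)
    (h : uu (G := G) kpos e i = uu kpos e' j) : e = e' ∧ i = j := by
  simp only [uu, Option.some.injEq, Sum.inr.injEq, Prod.mk.injEq, Fin.mk.injEq,
    Nat.mod_eq_of_lt hi, Nat.mod_eq_of_lt hj] at h
  exact h

lemma adj_uu (kpos : 0 < k) (hk2 : 2 ≤ k) (e : G.edgeSet) {t : ℕ} (ht : t < k)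
    (w : Option (V ⊕ G.edgeSet × Fin k)) :
    (ApexSubdiv G k fst snd).Adj (uu kpos e t) w ↔
      w = prevW kpos fst e t ∨ w = nextW kpos snd e t := by
  have hm : t % k = t := Nat.mod_eq_of_lt ht
  obtain (_ | (x | ⟨e', t'⟩)) := w
  · simp only [ApexSubdiv, SimpleGraph.fromRel_adj, uu, prevW, nextW, aF, aS]
    constructor
    · rintro ⟨-, (h | h)⟩ <;> exact h.elim
    · rintro (h | h) <;> split at h <;> simp_all
  · simp only [ApexSubdiv, SimpleGraph.fromRel_adj, uu, prevW, nextW, aF, aS, hm]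
    constructor
    · rintro ⟨hne, (h | h)⟩
      · exact h.elim
      · rcases h with ⟨h0, rfl⟩ | ⟨h1, rfl⟩
        · left; rw [if_pos h0]
        · right; rw [if_pos h1]
    · rintro (h | h)
      · split at h
        · rename_i h0
          simp only [Option.some.injEq, Sum.inl.injEq] at h
          exact ⟨by simp, Or.inr (Or.inl ⟨h0, h⟩)⟩
        · simp at h
      · split at h
        · rename_i h1
          simp only [Option.some.injEq, Sum.inl.injEq] at h
          exact ⟨by simp, Or.inr (Or.inr ⟨h1, h⟩)⟩
        · simp at h
  · simp only [ApexSubdiv, SimpleGraph.fromRel_adj, uu, prevW, nextW, aF, aS, hm]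
    have ht' := t'.2
    constructor
    · rintro ⟨hne, (⟨rfl, hstep⟩ | ⟨rfl, hstep⟩)⟩
      · right
        have htk : t ≠ k - 1 := by omega
        rw [if_neg htk]
        simp only [uu, Option.some.injEq, Sum.inr.injEq, Prod.mk.injEq, Fin.ext_iff,
          Nat.mod_eq_of_lt (show t + 1 < k by omega)]
        exact ⟨trivial, by omega⟩
      · left
        have ht0 : t ≠ 0 := by omega
        rw [if_neg ht0]
        simp only [uu, Option.some.injEq, Sum.inr.injEq, Prod.mk.injEq, Fin.ext_iff,
          Nat.mod_eq_of_lt (show t - 1 < k by omega)]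
        exact ⟨trivial, by omega⟩
    · rintro (h | h)
      · split at h
        · simp at h
        · rename_i ht0
          simp only [uu, Option.some.injEq, Sum.inr.injEq, Prod.mk.injEq, Fin.ext_iff,
            Nat.mod_eq_of_lt (show t - 1 < k by omega)] at h
          obtain ⟨rfl, h2⟩ := h
          refine ⟨?_, Or.inr ⟨rfl, by omega⟩⟩
          simp only [Ne, Option.some.injEq, Sum.inr.injEq, Prod.mk.injEq, Fin.ext_iff]
          rintro ⟨-, h3⟩
          omega
      · split at h
        · simp at h
        · rename_i htk
          simp only [uu, Option.some.injEq, Sum.inr.injEq, Prod.mk.injEq, Fin.ext_iff,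
            Nat.mod_eq_of_lt (show t + 1 < k by omega)] at h
          obtain ⟨rfl, h2⟩ := h
          refine ⟨?_, Or.inl ⟨rfl, by omega⟩⟩
          simp only [Ne, Option.some.injEq, Sum.inr.injEq, Prod.mk.injEq, Fin.ext_iff]
          rintro ⟨-, h3⟩
          omega

lemma prevW_ne_nextW (kpos : 0 < k) (hk2 : 2 ≤ k) (e : G.edgeSet) {t : ℕ} (ht : t < k) :
    prevW (G := G) kpos fst e t ≠ nextW kpos snd e t := by
  unfold prevW nextW
  split <;> split <;> simp_all [uu, aF, aS]
  · omega
  · intro h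
    simp only [Fin.mk.injEq, Nat.mod_eq_of_lt (show t - 1 < k by omega),
      Nat.mod_eq_of_lt (show t + 1 < k by omega)] at h
    omega


lemma cycle_two_edges {W : Type*} {G' : SimpleGraph W} {v x : W} {p : G'.Walk v v}
    (hp : p.IsCycle) (hx : x ∈ p.support) :
    ∃ a b, a ≠ b ∧ s(x, a) ∈ p.edges ∧ s(x, b) ∈ p.edges := by
  classical
  have hq : (p.rotate x hx).IsCycle := hp.rotate hx
  have hmem : ∀ f, f ∈ (p.rotate x hx).edges ↔ f ∈ p.edges := fun f =>
    (p.rotate_edges x hx).mem_iff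
  set q := p.rotate x hx with hqdef
  have hnil : ¬ q.Nil := hq.not_nil
  rw [SimpleGraph.Walk.not_nil_iff] at hnil
  obtain ⟨a, ha, r, hqe⟩ := hnil
  have hlen : 3 ≤ q.length := hq.three_le_length
  have hrlen : 0 < r.length := by
    have := congrArg SimpleGraph.Walk.length hqe
    simp only [SimpleGraph.Walk.length_cons] at this
    omega
  have hrnil : ¬ r.reverse.Nil := by
    rw [SimpleGraph.Walk.not_nil_iff_lt_length, SimpleGraph.Walk.length_reverse]
    exact hrlen
  rw [SimpleGraph.Walk.not_nil_iff] at hrnil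
  obtain ⟨b, hb, r2, hre⟩ := hrnil
  have hbr : s(x, b) ∈ r.edges := by
    have : s(x, b) ∈ r.reverse.edges := by rw [hre]; simp
    rwa [SimpleGraph.Walk.edges_reverse, List.mem_reverse] at this
  have hqedges : q.edges = s(x, a) :: r.edges := by rw [hqe]; simp
  have hnd : q.edges.Nodup := hq.isCircuit.isTrail.edges_nodup
  rw [hqedges, List.nodup_cons] at hnd
  refine ⟨a, b, ?_, ?_, ?_⟩
  · rintro rfl
    exact hnd.1 hbr
  · rw [← hmem, hqedges]; simp
  · rw [← hmem, hqedges]; exact List.mem_cons_of_mem _ hbr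
section Chain
variable {V : Type*} {G : SimpleGraph V} {k : ℕ} {fst snd : Sym2 V → V}
variable {v : Option (V ⊕ G.edgeSet × Fin k)} {p : (ApexSubdiv G k fst snd).Walk v v}

lemma cycle_uu_edges (kpos : 0 < k) (hk2 : 2 ≤ k) (e : G.edgeSet) (hp : p.IsCycle)
    {t : ℕ} (ht : t < k) (hmem : uu kpos e t ∈ p.support) :
    s(prevW kpos fst e t, uu kpos e t) ∈ p.edges ∧
    s(uu kpos e t, nextW kpos snd e t) ∈ p.edges := by
  obtain ⟨a, b, hab, ha, hb⟩ := cycle_two_edges hp hmem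
  have haa := p.adj_of_mem_edges ha
  have hbb := p.adj_of_mem_edges hb
  rw [adj_uu kpos hk2 e ht] at haa hbb
  have hswap : ∀ w : Option (V ⊕ G.edgeSet × Fin k),
      s(uu kpos e t, w) = s(w, uu kpos e t) := fun w => Sym2.eq_swap
  rcases haa with rfl | rfl <;> rcases hbb with rfl | rfl
  · exact absurd rfl hab
  · exact ⟨hswap _ ▸ ha, hb⟩
  · exact ⟨hswap _ ▸ hb, ha⟩
  · exact absurd rfl hab

lemma chain_down (kpos : 0 < k) (hk2 : 2 ≤ k) (e : G.edgeSet) (hp : p.IsCycle) :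
    ∀ t, t < k → uu kpos e t ∈ p.support →
      ∀ j, j ≤ t → s(prevW kpos fst e j, uu kpos e j) ∈ p.edges := by
  intro t
  induction t with
  | zero =>
    intro ht hm j hj
    obtain rfl : j = 0 := Nat.le_zero.mp hj
    exact (cycle_uu_edges kpos hk2 e hp ht hm).1
  | succ n ih =>
    intro ht hm j hj
    have hc := cycle_uu_edges kpos hk2 e hp ht hm
    rcases Nat.lt_or_ge j (n+1) with h | h
    · have hprev : prevW kpos fst e (n+1) = uu kpos e n := by
        rw [prevW, if_neg (by omega)]
        exact congrArg (uu kpos e) (by omega)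
      have hsup : uu kpos e n ∈ p.support :=
        p.fst_mem_support_of_mem_edges (hprev ▸ hc.1)
      exact ih (by omega) hsup j (by omega)
    · obtain rfl : j = n + 1 := by omega
      exact hc.1

lemma chain_up (kpos : 0 < k) (hk2 : 2 ≤ k) (e : G.edgeSet) (hp : p.IsCycle) :
    ∀ d t, t + d + 1 = k → uu kpos e t ∈ p.support →
      ∀ j, t ≤ j → j < k → s(uu kpos e j, nextW kpos snd e j) ∈ p.edges := by
  intro d
  induction d with
  | zero =>
    intro t htk hm j hj1 hj2
    obtain rfl : j = t := by omega
    exact (cycle_uu_edges kpos hk2 e hp (by omega) hm).2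
  | succ n ih =>
    intro t htk hm j hj1 hj2
    have hc := cycle_uu_edges kpos hk2 e hp (by omega) hm
    rcases Nat.eq_or_lt_of_le hj1 with rfl | h
    · exact hc.2
    · have hnext : nextW kpos snd e t = uu kpos e (t+1) := by
        rw [nextW, if_neg (by omega)]
      have hsup : uu kpos e (t+1) ∈ p.support :=
        p.snd_mem_support_of_mem_edges (hnext ▸ hc.2)
      exact ih (t+1) (by omega) hsup j (by omega) hj2

lemma adj_inl_shape (x : V) (w : Option (V ⊕ G.edgeSet × Fin k))
    (h : (ApexSubdiv G k fst snd).Adj (some (Sum.inl x)) w) :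
    w = none ∨ ∃ (e' : G.edgeSet) (t' : Fin k), w = some (Sum.inr (e', t')) := by
  obtain (_ | (y | ⟨e', t'⟩)) := w
  · exact Or.inl rfl
  · exfalso
    revert h
    simp [ApexSubdiv, SimpleGraph.fromRel_adj]
  · exact Or.inr ⟨e', t', rfl⟩

lemma exists_uu_mem (kpos : 0 < k) (hk2 : 2 ≤ k) (hp : p.IsCycle) :
    ∃ (e : G.edgeSet) (t : ℕ), t < k ∧ uu kpos e t ∈ p.support := by
  -- first, find either an internal vertex or an original vertex in the support
  have hlen : 3 ≤ p.length := hp.three_le_length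
  have hne : p.edges ≠ [] := by
    intro h
    have := p.length_edges
    rw [h] at this
    simp at this
    omega
  obtain ⟨f, hf⟩ := List.exists_mem_of_ne_nil _ hne
  induction f with
  | _ a b =>
    have hadj := p.adj_of_mem_edges hf
    have hsupa := p.fst_mem_support_of_mem_edges hf
    have hsupb := p.snd_mem_support_of_mem_edges hf
    have key : ∀ (c : Option (V ⊕ G.edgeSet × Fin k)), c ∈ p.support →
        (∃ (e' : G.edgeSet) (t' : Fin k), c = some (Sum.inr (e', t'))) →
        ∃ (e : G.edgeSet) (t : ℕ), t < k ∧ uu kpos e t ∈ p.support := by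
      rintro c hc ⟨e', t', rfl⟩
      refine ⟨e', t'.1, t'.2, ?_⟩
      have : uu kpos e' t'.1 = some (Sum.inr (e', t')) := by
        simp [uu, Fin.ext_iff, Nat.mod_eq_of_lt t'.2]
      rwa [this]
    have keyx : ∀ (x : V), some (Sum.inl x) ∈ p.support →
        ∃ (e : G.edgeSet) (t : ℕ), t < k ∧ uu kpos e t ∈ p.support := by
      intro x hx
      obtain ⟨c, d, hcd, hc, hd⟩ := cycle_two_edges hp hx
      have hc' := adj_inl_shape x c (p.adj_of_mem_edges hc)
      have hd' := adj_inl_shape x d (p.adj_of_mem_edges hd)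
      rcases hc' with rfl | hc'
      · rcases hd' with rfl | hd'
        · exact absurd rfl hcd
        · exact key d (p.snd_mem_support_of_mem_edges hd) hd'
      · exact key c (p.snd_mem_support_of_mem_edges hc) hc'
    obtain (_ | (x | ⟨e', t'⟩)) := a
    · -- a = none, so b must be some (inl x) or inr
      obtain (_ | (y | ⟨e', t'⟩)) := b
      · exact absurd hadj (ApexSubdiv G k fst snd).irrefl
      · exact keyx y hsupb
      · exact key _ hsupb ⟨e', t', rfl⟩
    · exact keyx x hsupa
    · exact key _ hsupa ⟨e', t', rfl⟩

end Chain

section Lower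
variable {V : Type*} {G : SimpleGraph V} {k : ℕ} {fst snd : Sym2 V → V}
variable {v : Option (V ⊕ G.edgeSet × Fin k)} {p : (ApexSubdiv G k fst snd).Walk v v}

lemma cycle_length_lower (hk7 : 7 ≤ k)
    (hfs : ∀ e : G.edgeSet, fst e.1 ≠ snd e.1) (hp : p.IsCycle) :
    k + 3 ≤ p.length := by
  classical
  have kpos : 0 < k := by omega
  have hk2 : 2 ≤ k := by omega
  obtain ⟨e, t0, ht0, hmem⟩ := exists_uu_mem kpos hk2 hp
  have hdown := chain_down kpos hk2 e hp t0 ht0 hmem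
  have hup := chain_up kpos hk2 e hp (k - 1 - t0) t0 (by omega) hmem
  have hE0 : s(aF fst e, uu kpos e 0) ∈ p.edges := by
    have := hdown 0 (Nat.zero_le _)
    rwa [prevW, if_pos rfl] at this
  have hEk : s(uu kpos e (k-1), aS snd e) ∈ p.edges := by
    have := hup (k-1) (by omega) (by omega)
    rwa [nextW, if_pos rfl] at this
  have hEint : ∀ i, i + 1 < k → s(uu kpos e i, uu kpos e (i+1)) ∈ p.edges := by
    intro i hi
    rcases Nat.lt_or_ge i t0 with h | h
    · have := hdown (i+1) (by omega)
      rwa [prevW, if_neg (by omega), show i + 1 - 1 = i from rfl] at this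
    · have := hup i h (by omega)
      rwa [nextW, if_neg (by omega)] at this
  have hFsup : aF fst e ∈ p.support := p.fst_mem_support_of_mem_edges hE0
  have hSsup : aS snd e ∈ p.support := p.snd_mem_support_of_mem_edges hEk
  -- shape facts
  have hshapeF : ∀ c, s(aF fst e, c) ∈ p.edges →
      c = none ∨ ∃ (e' : G.edgeSet) (t' : Fin k), c = some (Sum.inr (e', t')) := by
    intro c hc
    exact adj_inl_shape _ c (p.adj_of_mem_edges hc)
  have hshapeS : ∀ c, s(aS snd e, c) ∈ p.edges →
      c = none ∨ ∃ (e' : G.edgeSet) (t' : Fin k), c = some (Sum.inr (e', t')) := by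
    intro c hc
    exact adj_inl_shape _ c (p.adj_of_mem_edges hc)
  -- extra edge at aF
  obtain ⟨cF, hcFe, hcFne⟩ : ∃ c, s(aF fst e, c) ∈ p.edges ∧ c ≠ uu kpos e 0 := by
    obtain ⟨c, d, hcd, hc, hd⟩ := cycle_two_edges hp hFsup
    rcases eq_or_ne c (uu kpos e 0) with rfl | h
    · exact ⟨d, hd, hcd.symm⟩
    · exact ⟨c, hc, h⟩
  obtain ⟨cS, hcSe, hcSne⟩ : ∃ c, s(aS snd e, c) ∈ p.edges ∧ c ≠ uu kpos e (k-1) := by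
    obtain ⟨c, d, hcd, hc, hd⟩ := cycle_two_edges hp hSsup
    rcases eq_or_ne c (uu kpos e (k-1)) with rfl | h
    · exact ⟨d, hd, hcd.symm⟩
    · exact ⟨c, hc, h⟩
  have hcFshape := hshapeF cF hcFe
  have hcSshape := hshapeS cS hcSe
  -- basic distinctness of named vertices
  have haFS : (aF fst e : Option (V ⊕ G.edgeSet × Fin k)) ≠ aS snd e := by
    simp only [aF, aS, Ne, Option.some.injEq, Sum.inl.injEq]
    exact hfs e
  have haFu : ∀ i, aF fst e ≠ uu kpos e i := by intro i; simp [aF, uu]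
  have haSu : ∀ i, aS snd e ≠ uu kpos e i := by intro i; simp [aS, uu]
  have hcF_not_inl : ∀ x : V, cF ≠ some (Sum.inl x) := by
    rcases hcFshape with rfl | ⟨e', t', rfl⟩ <;> simp
  have hcS_not_inl : ∀ x : V, cS ≠ some (Sum.inl x) := by
    rcases hcSshape with rfl | ⟨e', t', rfl⟩ <;> simp
  set A : Finset (Sym2 (Option (V ⊕ G.edgeSet × Fin k))) :=
    (Finset.range (k-1)).image (fun i => s(uu kpos e i, uu kpos e (i+1))) with hA
  set B : Finset (Sym2 (Option (V ⊕ G.edgeSet × Fin k))) :=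
    {s(aF fst e, uu kpos e 0), s(uu kpos e (k-1), aS snd e),
     s(aF fst e, cF), s(aS snd e, cS)} with hB
  have hcardA : A.card = k - 1 := by
    rw [hA, Finset.card_image_of_injOn, Finset.card_range]
    intro i hi j hj hij
    simp only [Finset.mem_coe, Finset.mem_range] at hi hj
    rw [Sym2.eq_iff] at hij
    rcases hij with ⟨h1, h2⟩ | ⟨h1, h2⟩
    · exact (uu_inj kpos (by omega) (by omega) h1).2
    · have e1 := (uu_inj kpos (by omega) (by omega) h1).2
      have e2 := (uu_inj kpos (by omega) (by omega) h2).2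
      omega
  have hdisj : Disjoint A B := by
    rw [Finset.disjoint_left]
    intro f hfA hfB
    rw [hA] at hfA
    simp only [Finset.mem_image, Finset.mem_range] at hfA
    obtain ⟨i, hi, hieq⟩ := hfA
    rw [hB] at hfB
    simp only [Finset.mem_insert, Finset.mem_singleton] at hfB
    rcases hfB with rfl | rfl | rfl | rfl <;>
      rw [Sym2.eq_iff] at hieq <;>
      rcases hieq with ⟨h1, h2⟩ | ⟨h1, h2⟩ <;>
      first
        | exact haFu _ h1.symm
        | exact haFu _ h2.symm
        | exact haSu _ h1.symm
        | exact haSu _ h2.symm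
  have hcardB : B.card = 4 := by
    have d12 : s(aF fst e, uu kpos e 0) ≠ s(uu kpos e (k-1), aS snd e) := by
      rw [Ne, Sym2.eq_iff]
      rintro (⟨h1, h2⟩ | ⟨h1, h2⟩)
      · exact haFu _ h1
      · exact haFS h1
    have d13 : s(aF fst e, uu kpos e 0) ≠ s(aF fst e, cF) := by
      rw [Ne, Sym2.eq_iff]
      rintro (⟨h1, h2⟩ | ⟨h1, h2⟩)
      · exact hcFne h2.symm
      · exact haFu 0 h2.symm
    have d14 : s(aF fst e, uu kpos e 0) ≠ s(aS snd e, cS) := by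
      rw [Ne, Sym2.eq_iff]
      rintro (⟨h1, h2⟩ | ⟨h1, h2⟩)
      · exact haFS h1
      · exact haSu 0 h2.symm
    have d23 : s(uu kpos e (k-1), aS snd e) ≠ s(aF fst e, cF) := by
      rw [Ne, Sym2.eq_iff]
      rintro (⟨h1, h2⟩ | ⟨h1, h2⟩)
      · exact haFu (k-1) h1.symm
      · exact haFS h2.symm
    have d24 : s(uu kpos e (k-1), aS snd e) ≠ s(aS snd e, cS) := by
      rw [Ne, Sym2.eq_iff]
      rintro (⟨h1, h2⟩ | ⟨h1, h2⟩)
      · exact haSu (k-1) h1.symm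
      · exact hcSne h1.symm
    have d34 : s(aF fst e, cF) ≠ s(aS snd e, cS) := by
      rw [Ne, Sym2.eq_iff]
      rintro (⟨h1, h2⟩ | ⟨h1, h2⟩)
      · exact haFS h1
      · exact hcS_not_inl (fst e.1) h1.symm
    rw [hB]
    rw [Finset.card_insert_of_notMem (by simp [d12, d13, d14]),
        Finset.card_insert_of_notMem (by simp [d23, d24]),
        Finset.card_insert_of_notMem (by simp [d34]),
        Finset.card_singleton]
  have hsubset : A ∪ B ⊆ p.edges.toFinset := by
    intro f hf
    rw [List.mem_toFinset]
    rcases Finset.mem_union.mp hf with hfA | hfB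
    · rw [hA] at hfA
      simp only [Finset.mem_image, Finset.mem_range] at hfA
      obtain ⟨i, hi, rfl⟩ := hfA
      exact hEint i (by omega)
    · rw [hB] at hfB
      simp only [Finset.mem_insert, Finset.mem_singleton] at hfB
      rcases hfB with rfl | rfl | rfl | rfl
      · exact hE0
      · exact hEk
      · exact hcFe
      · exact hcSe
  have hcard : (A ∪ B).card = k + 3 := by
    rw [Finset.card_union_of_disjoint hdisj, hcardA, hcardB]
    omega
  calc k + 3 = (A ∪ B).card := hcard.symm
    _ ≤ p.edges.toFinset.card := Finset.card_le_card hsubset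
    _ ≤ p.edges.length := p.edges.toFinset_card_le
    _ = p.length := p.length_edges

end Lower

section Upper
variable {V : Type*} {G : SimpleGraph V} {k : ℕ} {fst snd : Sym2 V → V}

def pathOfFn {W : Type*} (H : SimpleGraph W) (f : ℕ → W) :
    (n : ℕ) → (∀ i, i < n → H.Adj (f i) (f (i+1))) → H.Walk (f 0) (f n)
  | 0, _ => SimpleGraph.Walk.nil
  | n+1, hf => (pathOfFn H f n (fun i h => hf i (by omega))).concat (hf n (by omega))

lemma pathOfFn_length {W : Type*} (H : SimpleGraph W) (f : ℕ → W) (n : ℕ)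
    (hf : ∀ i, i < n → H.Adj (f i) (f (i+1))) : (pathOfFn H f n hf).length = n := by
  induction n with
  | zero => rfl
  | succ m ih => simp [pathOfFn, SimpleGraph.Walk.length_concat, ih]

lemma pathOfFn_support {W : Type*} (H : SimpleGraph W) (f : ℕ → W) (n : ℕ)
    (hf : ∀ i, i < n → H.Adj (f i) (f (i+1))) :
    (pathOfFn H f n hf).support = (List.range (n+1)).map f := by
  induction n with
  | zero => rfl
  | succ m ih =>
    rw [pathOfFn, SimpleGraph.Walk.support_concat, ih, List.range_succ (n := m + 1)]
    simp

lemma pathOfFn_edges {W : Type*} (H : SimpleGraph W) (f : ℕ → W) (n : ℕ)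
    (hf : ∀ i, i < n → H.Adj (f i) (f (i+1))) :
    (pathOfFn H f n hf).edges = (List.range n).map (fun i => s(f i, f (i+1))) := by
  induction n with
  | zero => rfl
  | succ m ih =>
    rw [pathOfFn, SimpleGraph.Walk.edges_concat, ih, List.range_succ (n := m)]
    simp

def cyc (fst snd : Sym2 V → V) (e : G.edgeSet) (j : ℕ) : Option (V ⊕ G.edgeSet × Fin k) :=
  if j = 1 then some (Sum.inl (fst e.1))
  else if h : 2 ≤ j ∧ j ≤ k + 1 then some (Sum.inr (e, ⟨j - 2, by omega⟩))
  else if j = k + 2 then some (Sum.inl (snd e.1))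
  else none

lemma cyc_none {j : ℕ} (hj : j ≤ k + 3) :
    cyc (G := G) (k := k) fst snd e j = none ↔ j = 0 ∨ j = k + 3 := by
  unfold cyc
  split_ifs <;> simp <;> omega

lemma cyc_inj (hfse : fst e.1 ≠ snd e.1) {i j : ℕ} (hi1 : 1 ≤ i) (hi2 : i ≤ k + 3)
    (hj1 : 1 ≤ j) (hj2 : j ≤ k + 3)
    (h : cyc (G := G) (k := k) fst snd e i = cyc fst snd e j) : i = j := by
  unfold cyc at h
  split_ifs at h <;>
    simp only [Option.some.injEq, Sum.inl.injEq, Sum.inr.injEq, Prod.mk.injEq,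
      Fin.mk.injEq, reduceCtorEq] at h <;>
    first
      | omega
      | (exact absurd h hfse)
      | (exact absurd h.symm hfse)
      | (exact h.elim)

lemma upper_cycle (hk2 : 2 ≤ k) (e : G.edgeSet) (hfse : fst e.1 ≠ snd e.1) :
    ∃ w : (ApexSubdiv G k fst snd).Walk none none, w.IsCycle ∧ w.length = k + 3 := by
  have hadj : ∀ i, i < k + 3 →
      (ApexSubdiv G k fst snd).Adj (cyc fst snd e i) (cyc fst snd e (i+1)) := by
    intro i hi
    rcases Nat.lt_or_ge i 1 with h1 | h1
    · obtain rfl : i = 0 := by omega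
      have h0 : cyc (G := G) (k := k) fst snd e 0 = none := by unfold cyc; split_ifs <;> simp_all
      have h1' : cyc (G := G) (k := k) fst snd e 1 = some (Sum.inl (fst e.1)) := by
        unfold cyc; rw [if_pos rfl]
      rw [h0, h1']
      simp [ApexSubdiv, SimpleGraph.fromRel_adj]
    rcases Nat.lt_or_ge i 2 with h2 | h2
    · obtain rfl : i = 1 := by omega
      have h1' : cyc (G := G) (k := k) fst snd e 1 = some (Sum.inl (fst e.1)) := by
        unfold cyc; rw [if_pos rfl]
      have h2' : cyc (G := G) (k := k) fst snd e 2 = some (Sum.inr (e, ⟨0, by omega⟩)) := by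
        unfold cyc; rw [if_neg (by omega), dif_pos (by omega)]
      rw [h1', h2']
      simp [ApexSubdiv, SimpleGraph.fromRel_adj]
    rcases Nat.lt_or_ge i (k+1) with h3 | h3
    · -- 2 ≤ i ≤ k : internal edge
      have hi' : cyc (G := G) (k := k) fst snd e i = some (Sum.inr (e, ⟨i-2, by omega⟩)) := by
        unfold cyc; rw [if_neg (by omega), dif_pos (by omega)]
      have hi'' : cyc (G := G) (k := k) fst snd e (i+1) =
          some (Sum.inr (e, ⟨i-1, by omega⟩)) := by
        unfold cyc; rw [if_neg (by omega), dif_pos (by omega)]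
        exact congrArg (fun t : Fin k => some (Sum.inr (e, t)))
          (Fin.ext (show i + 1 - 2 = i - 1 by omega))
      rw [hi', hi'']
      have hne : (some (Sum.inr (e, (⟨i-2, by omega⟩ : Fin k)))
            : Option (V ⊕ G.edgeSet × Fin k)) ≠ some (Sum.inr (e, ⟨i-1, by omega⟩)) := by
        simp only [Ne, Option.some.injEq, Sum.inr.injEq, Prod.mk.injEq, Fin.mk.injEq]
        rintro ⟨-, hcon⟩
        omega
      exact (SimpleGraph.fromRel_adj _ _ _).mpr
        ⟨hne, Or.inl ⟨rfl, show i - 2 + 1 = i - 1 by omega⟩⟩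
    rcases Nat.lt_or_ge i (k+2) with h4 | h4
    · obtain rfl : i = k + 1 := by omega
      have hi' : cyc (G := G) (k := k) fst snd e (k+1) =
          some (Sum.inr (e, ⟨k-1, by omega⟩)) := by
        unfold cyc; rw [if_neg (by omega), dif_pos (by omega)]
        exact congrArg (fun t : Fin k => some (Sum.inr (e, t)))
          (Fin.ext (show k + 1 - 2 = k - 1 by omega))
      have hi'' : cyc (G := G) (k := k) fst snd e (k+2) = some (Sum.inl (snd e.1)) := by
        unfold cyc; rw [if_neg (by omega), dif_neg (by omega), if_pos rfl]
      rw [hi', hi'']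
      exact (SimpleGraph.fromRel_adj _ _ _).mpr
        ⟨by simp, Or.inr (Or.inr ⟨rfl, rfl⟩)⟩
    · obtain rfl : i = k + 2 := by omega
      have hi' : cyc (G := G) (k := k) fst snd e (k+2) = some (Sum.inl (snd e.1)) := by
        unfold cyc; rw [if_neg (by omega), dif_neg (by omega), if_pos rfl]
      have hi'' : cyc (G := G) (k := k) fst snd e (k+3) = none := by
        unfold cyc; rw [if_neg (by omega), dif_neg (by omega), if_neg (by omega)]
      rw [hi', hi'']
      simp [ApexSubdiv, SimpleGraph.fromRel_adj]
  have h0 : cyc (G := G) (k := k) fst snd e 0 = none := by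
    unfold cyc; rw [if_neg (by omega), dif_neg (by omega), if_neg (by omega)]
  have hlast : cyc (G := G) (k := k) fst snd e (k+3) = none := by
    unfold cyc; rw [if_neg (by omega), dif_neg (by omega), if_neg (by omega)]
  refine ⟨(pathOfFn _ (cyc fst snd e) (k+3) hadj).copy h0 hlast, ?_, ?_⟩
  · have hlen : ((pathOfFn _ (cyc fst snd e) (k+3) hadj).copy h0 hlast).length = k + 3 := by
      rw [SimpleGraph.Walk.length_copy, pathOfFn_length]
    refine ⟨⟨⟨?_⟩, ?_⟩, ?_⟩
    · -- edges nodup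
      rw [SimpleGraph.Walk.edges_copy, pathOfFn_edges]
      refine List.Nodup.map_on ?_ List.nodup_range
      intro i hi j hj hij
      rw [List.mem_range] at hi hj
      rw [Sym2.eq_iff] at hij
      rcases hij with ⟨ha, hb⟩ | ⟨ha, hb⟩
      · rcases Nat.lt_or_ge i 1 with h1 | h1
        · obtain rfl : i = 0 := by omega
          rcases Nat.lt_or_ge j 1 with h2 | h2
          · omega
          · rw [h0] at ha
            have := (cyc_none (e := e) (fst := fst) (snd := snd) (by omega)).mp ha.symm
            omega
        · rcases Nat.lt_or_ge j 1 with h2 | h2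
          · obtain rfl : j = 0 := by omega
            rw [h0] at ha
            have := (cyc_none (e := e) (fst := fst) (snd := snd) (by omega)).mp ha
            omega
          · exact cyc_inj hfse h1 (by omega) h2 (by omega) ha
      · -- crossed case
        rcases Nat.lt_or_ge i 1 with h1 | h1
        · obtain rfl : i = 0 := by omega
          rw [h0] at ha
          have := (cyc_none (e := e) (fst := fst) (snd := snd) (by omega)).mp ha.symm
          obtain rfl : j = k + 2 := by omega
          -- hb : cyc 1 = cyc (k+2) : aF = aS
          have e1 : cyc (G := G) (k := k) fst snd e 1 = some (Sum.inl (fst e.1)) := by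
            unfold cyc; rw [if_pos rfl]
          have e2 : cyc (G := G) (k := k) fst snd e (k+2) = some (Sum.inl (snd e.1)) := by
            unfold cyc; rw [if_neg (by omega), dif_neg (by omega), if_pos rfl]
          rw [e1, e2] at hb
          simp only [Option.some.injEq, Sum.inl.injEq] at hb
          exact absurd hb hfse
        · have hij' : i = j + 1 := cyc_inj hfse h1 (by omega) (by omega) (by omega) ha
          rcases Nat.lt_or_ge j 1 with h2 | h2
          · obtain rfl : j = 0 := by omega
            rw [h0] at hb
            have := (cyc_none (e := e) (fst := fst) (snd := snd) (by omega)).mp hb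
            omega
          · have := cyc_inj hfse (by omega) (by omega) h2 (by omega) hb
            omega
    · -- nonempty
      intro hcon
      have := congrArg SimpleGraph.Walk.length hcon
      rw [hlen] at this
      simp at this
    · -- support tail nodup
      rw [SimpleGraph.Walk.support_copy, pathOfFn_support]
      have : (List.range (k+3+1)).map (cyc (G := G) (k := k) fst snd e) =
          cyc (G := G) (k := k) fst snd e 0 ::
            ((List.range (k+3)).map (fun i => cyc (G := G) (k := k) fst snd e (i+1))) := by
        rw [List.range_succ_eq_map]
        simp [Function.comp]
      rw [this, List.tail_cons]
      refine List.Nodup.map_on ?_ List.nodup_range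
      intro i hi j hj hij
      rw [List.mem_range] at hi hj
      have := cyc_inj hfse (by omega) (by omega) (by omega) (by omega) hij
      omega
  · rw [SimpleGraph.Walk.length_copy, pathOfFn_length]

end Upper

end ApexAux

/-- For every simple graph `G` with at least one edge and every odd integer `k ≥ 7`, the girth
of the apex `k`-subdivision of `G` equals `k + 3`. -/
theorem apexSubdiv_girth {V : Type*} (G : SimpleGraph V) (hE : G.edgeSet.Nonempty) (k : ℕ)
    (hk : Odd k) (hk7 : 7 ≤ k)
    (fst snd : Sym2 V → V) (hor : ∀ e ∈ G.edgeSet, e = s(fst e, snd e)) :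
    (ApexSubdiv G k fst snd).egirth = (k : ℕ∞) + 3 := by
  classical
  obtain ⟨e0, he0⟩ := hE
  have hfse : ∀ e : G.edgeSet, fst e.1 ≠ snd e.1 := by
    intro e
    have h1 : (e : Sym2 V) ∈ G.edgeSet := e.2
    rw [hor e.1 e.2, SimpleGraph.mem_edgeSet] at h1
    exact h1.ne
  have hk2 : 2 ≤ k := by omega
  apply le_antisymm
  · obtain ⟨w, hw, hlen⟩ := ApexAux.upper_cycle hk2 ⟨e0, he0⟩ (hfse ⟨e0, he0⟩)
    calc (ApexSubdiv G k fst snd).egirth ≤ (w.length : ℕ∞) := by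
          rw [SimpleGraph.egirth]
          exact iInf_le_of_le none (iInf_le_of_le w (iInf_le _ hw))
      _ = (k : ℕ∞) + 3 := by rw [hlen]; push_cast; ring
  · rw [SimpleGraph.le_egirth]
    intro a w hw
    have hlow := ApexAux.cycle_length_lower hk7 hfse hw
    calc (k : ℕ∞) + 3 = ((k + 3 : ℕ) : ℕ∞) := by push_cast; ring
      _ ≤ (w.length : ℕ∞) := by exact_mod_cast hlow
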